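/- With S = A ∪ B as above embedded via ε(a,b) = (a,b,0) into the extraspecial group G of order p^{1+2d} (with either multiplication (a,b,z)(c,d,w) = (a+c,b+d,z+w+b·c) or the variant with the carrying term), no two distinct elements of ε(S) commute: for distinct g,h ∈ ε(S), [g,h] equals (0,0,1) if g,h ∈ ε(A), (0,0,−1) if g,h ∈ ε(B), and (0,0,±1) in the mixed case. In particular [g,h] ≠ identity since p is odd. -/
import Mathlib


namespace Stmt17

/-- The "carrying" cocycle `φ(a,b) = [ι(a)+ι(b) ≥ p]`. -/
def phi (p : ℕ) (a b : ZMod p) : ZMod p :=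
  if a.val + b.val < p then 0 else 1

/-- Exponent-`p` multiplication `(a,b,z)(c,d,w) = (a+c, b+d, z+w+b·c)`. -/
def gmul (p d : ℕ) (g h : (Fin d → ZMod p) × (Fin d → ZMod p) × ZMod p) :
    (Fin d → ZMod p) × (Fin d → ZMod p) × ZMod p :=
  (g.1 + h.1, g.2.1 + h.2.1, g.2.2 + h.2.2 + ∑ i : Fin d, g.2.1 i * h.1 i)

/-- Inverse for `gmul`: `(a,b,z)⁻¹ = (-a,-b,-z+a·b)`. -/
def ginv (p d : ℕ) (g : (Fin d → ZMod p) × (Fin d → ZMod p) × ZMod p) :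
    (Fin d → ZMod p) × (Fin d → ZMod p) × ZMod p :=
  (-g.1, -g.2.1, -g.2.2 + ∑ i : Fin d, g.1 i * g.2.1 i)

/-- Commutator `[g,h] = g⁻¹h⁻¹gh` for `gmul`. -/
def gcomm (p d : ℕ) (g h : (Fin d → ZMod p) × (Fin d → ZMod p) × ZMod p) :
    (Fin d → ZMod p) × (Fin d → ZMod p) × ZMod p :=
  gmul p d (gmul p d (gmul p d (ginv p d g) (ginv p d h)) g) h

/-- Carrying multiplication `(a,b,z)(c,d,w) = (a+c, b+d, z+w+b·c+φ(a₁,c₁))`. -/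
def mmul (p d : ℕ) (hd : 0 < d)
    (g h : (Fin d → ZMod p) × (Fin d → ZMod p) × ZMod p) :
    (Fin d → ZMod p) × (Fin d → ZMod p) × ZMod p :=
  (g.1 + h.1, g.2.1 + h.2.1,
    g.2.2 + h.2.2 + (∑ i : Fin d, g.2.1 i * h.1 i) + phi p (g.1 ⟨0, hd⟩) (h.1 ⟨0, hd⟩))

/-- Inverse for `mmul`: `(a,b,z)⁻¹ = (-a,-b,-z+a·b-φ(a₁,-a₁))`. -/
def minv (p d : ℕ) (hd : 0 < d)
    (g : (Fin d → ZMod p) × (Fin d → ZMod p) × ZMod p) :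
    (Fin d → ZMod p) × (Fin d → ZMod p) × ZMod p :=
  (-g.1, -g.2.1,
    -g.2.2 + (∑ i : Fin d, g.1 i * g.2.1 i) - phi p (g.1 ⟨0, hd⟩) (-g.1 ⟨0, hd⟩))

/-- Commutator `[g,h] = g⁻¹h⁻¹gh` for `mmul`. -/
def mcomm (p d : ℕ) (hd : 0 < d)
    (g h : (Fin d → ZMod p) × (Fin d → ZMod p) × ZMod p) :
    (Fin d → ZMod p) × (Fin d → ZMod p) × ZMod p :=
  mmul p d hd (mmul p d hd (mmul p d hd (minv p d hd g) (minv p d hd h)) g) h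

/-- `a_k = Σ_{i ≤ k} e_i + Σ_{j ≤ k-1} f_j`. -/
def aVec (p d : ℕ) (k : Fin d) : (Fin d → ZMod p) × (Fin d → ZMod p) :=
  (fun i => if i ≤ k then 1 else 0, fun j => if j < k then 1 else 0)

/-- `b_k = Σ_{i ≤ k-1} e_i + 2 e_k + Σ_{j ≤ k} f_j`. -/
def bVec (p d : ℕ) (k : Fin d) : (Fin d → ZMod p) × (Fin d → ZMod p) :=
  (fun i => if i < k then 1 else if i = k then 2 else 0,
   fun j => if j ≤ k then 1 else 0)

/-- The embedding `ε(a,b) = (a,b,0)` of `S = A ∪ B`. -/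
def εS (p d : ℕ) : Set ((Fin d → ZMod p) × (Fin d → ZMod p) × ZMod p) :=
  (fun s : (Fin d → ZMod p) × (Fin d → ZMod p) => (s.1, s.2, (0 : ZMod p))) ''
    (Set.range (aVec p d) ∪ Set.range (bVec p d))


section Helpers
variable {p d : ℕ}

/-! ### Counting lemmas -/

lemma sum_ite_ite (P Q : Fin d → Prop) [DecidablePred P] [DecidablePred Q] :
    ∑ i, (if P i then (1:ZMod p) else 0) * (if Q i then 1 else 0)
      = ((Finset.univ.filter fun i => P i ∧ Q i).card : ZMod p) := by
  rw [Finset.card_filter]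
  push_cast
  refine Finset.sum_congr rfl fun i _ => ?_
  by_cases hP : P i <;> by_cases hQ : Q i <;> simp [hP, hQ]

lemma card_lt_le (k l : Fin d) (h : k ≤ l) :
    (Finset.univ.filter fun i => i < k ∧ i ≤ l).card = k.val := by
  rw [show (Finset.univ.filter fun i => i < k ∧ i ≤ l) = Finset.Iio k by
    ext i; simp; omega]
  simp

lemma card_lt_le' (k l : Fin d) (h : l < k) :
    (Finset.univ.filter fun i => i < k ∧ i ≤ l).card = l.val + 1 := by
  rw [show (Finset.univ.filter fun i => i < k ∧ i ≤ l) = Finset.Iic l by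
    ext i; simp; omega]
  simp

lemma card_le_lt (k l : Fin d) (h : l ≤ k) :
    (Finset.univ.filter fun i => i ≤ k ∧ i < l).card = l.val := by
  rw [show (Finset.univ.filter fun i => i ≤ k ∧ i < l) = Finset.Iio l by
    ext i; simp; omega]
  simp

lemma card_le_lt' (k l : Fin d) (h : k < l) :
    (Finset.univ.filter fun i => i ≤ k ∧ i < l).card = k.val + 1 := by
  rw [show (Finset.univ.filter fun i => i ≤ k ∧ i < l) = Finset.Iic k by
    ext i; simp; omega]
  simp

lemma card_le_le (k l : Fin d) (h : k ≤ l) :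
    (Finset.univ.filter fun i => i ≤ k ∧ i ≤ l).card = k.val + 1 := by
  rw [show (Finset.univ.filter fun i => i ≤ k ∧ i ≤ l) = Finset.Iic k by
    ext i; simp; omega]
  simp

lemma card_le_le' (k l : Fin d) (h : l ≤ k) :
    (Finset.univ.filter fun i => i ≤ k ∧ i ≤ l).card = l.val + 1 := by
  rw [show (Finset.univ.filter fun i => i ≤ k ∧ i ≤ l) = Finset.Iic l by
    ext i; simp; omega]
  simp

lemma card_and_eqr (Q : Fin d → Prop) [DecidablePred Q] (l : Fin d) :
    (Finset.univ.filter fun i => Q i ∧ i = l).card = if Q l then 1 else 0 := by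
  by_cases h : Q l
  · rw [show (Finset.univ.filter fun i => Q i ∧ i = l) = {l} by
      ext i; simp; rintro rfl; exact h]
    simp [h]
  · rw [show (Finset.univ.filter fun i => Q i ∧ i = l) = ∅ by
      ext i; simp; rintro h' rfl; exact h h']
    simp [h]

lemma card_eq_andl (Q : Fin d → Prop) [DecidablePred Q] (l : Fin d) :
    (Finset.univ.filter fun i => i = l ∧ Q i).card = if Q l then 1 else 0 := by
  rw [Finset.filter_congr (q := fun i => Q i ∧ i = l) (fun i _ => and_comm), card_and_eqr]

lemma sum_add_leftS (u v w : Fin d → ZMod p) :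
    ∑ i, (u i + v i) * w i = (∑ i, u i * w i) + ∑ i, v i * w i := by
  simp [add_mul, Finset.sum_add_distrib]

lemma sum_add_rightS (u v w : Fin d → ZMod p) :
    ∑ i, u i * (v i + w i) = (∑ i, u i * v i) + ∑ i, u i * w i := by
  simp [mul_add, Finset.sum_add_distrib]

end Helpers

section Dv
variable {p d : ℕ}

lemma bVec_fst (k : Fin d) :
    (bVec p d k).1 = fun i => (if i ≤ k then (1:ZMod p) else 0) + (if i = k then 1 else 0) := by
  funext i
  simp only [bVec]
  rcases lt_trichotomy i k with h | h | h
  · simp [h, h.le, h.ne]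
  · subst h; simp; norm_num
  · simp [h.ne', not_le.mpr h, not_lt.mpr h.le]

/-- The symplectic-form value `b·c - a·d` between two (a,b)-pairs. -/
def Dv (p d : ℕ) (s t : (Fin d → ZMod p) × (Fin d → ZMod p)) : ZMod p :=
  (∑ i, s.2 i * t.1 i) - ∑ i, s.1 i * t.2 i

lemma dv_aa (k l : Fin d) (h : k ≠ l) :
    Dv p d (aVec p d k) (aVec p d l) = 1 ∨ Dv p d (aVec p d k) (aVec p d l) = -1 := by
  have e : Dv p d (aVec p d k) (aVec p d l)
      = ((Finset.univ.filter fun i => i < k ∧ i ≤ l).card : ZMod p)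
        - ((Finset.univ.filter fun i => i ≤ k ∧ i < l).card : ZMod p) := by
    simp only [Dv, aVec, sum_ite_ite]
  rcases lt_or_gt_of_ne h with hkl | hkl
  · right; rw [e, card_lt_le k l hkl.le, card_le_lt' k l hkl]; push_cast; ring
  · left; rw [e, card_lt_le' k l hkl, card_le_lt k l hkl.le]; push_cast; ring

lemma dv_ab (k l : Fin d) :
    Dv p d (aVec p d k) (bVec p d l) = 1 ∨ Dv p d (aVec p d k) (bVec p d l) = -1 := by
  have e : Dv p d (aVec p d k) (bVec p d l)
      = (((Finset.univ.filter fun i => i < k ∧ i ≤ l).card : ZMod p)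
          + if l < k then 1 else 0)
        - ((Finset.univ.filter fun i => i ≤ k ∧ i ≤ l).card : ZMod p) := by
    simp only [Dv, aVec, bVec_fst]
    rw [show (bVec p d l).2 = fun j => if j ≤ l then (1:ZMod p) else 0 from rfl]
    rw [sum_add_rightS]
    simp only [sum_ite_ite, card_and_eqr]
    push_cast
    ring
  rcases le_or_gt k l with hkl | hkl
  · right
    rw [e, card_lt_le k l hkl, card_le_le k l hkl, if_neg (not_lt.mpr hkl)]
    push_cast; ring
  · left
    rw [e, card_lt_le' k l hkl, card_le_le' k l hkl.le, if_pos hkl]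
    push_cast; ring

lemma dv_ba (k l : Fin d) :
    Dv p d (bVec p d k) (aVec p d l) = 1 ∨ Dv p d (bVec p d k) (aVec p d l) = -1 := by
  have e : Dv p d (bVec p d k) (aVec p d l)
      = ((Finset.univ.filter fun i => i ≤ k ∧ i ≤ l).card : ZMod p)
        - (((Finset.univ.filter fun i => i ≤ k ∧ i < l).card : ZMod p)
          + if k < l then 1 else 0) := by
    simp only [Dv, aVec, bVec_fst]
    rw [show (bVec p d k).2 = fun j => if j ≤ k then (1:ZMod p) else 0 from rfl]
    rw [sum_add_leftS]
    simp only [sum_ite_ite, card_eq_andl]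
    push_cast
    ring
  rcases le_or_gt l k with hkl | hkl
  · left
    rw [e, card_le_le' k l hkl, card_le_lt k l hkl, if_neg (not_lt.mpr hkl)]
    push_cast; ring
  · right
    rw [e, card_le_le k l hkl.le, card_le_lt' k l hkl, if_pos hkl]
    push_cast; ring

lemma dv_bb (k l : Fin d) (h : k ≠ l) :
    Dv p d (bVec p d k) (bVec p d l) = 1 ∨ Dv p d (bVec p d k) (bVec p d l) = -1 := by
  have e : Dv p d (bVec p d k) (bVec p d l)
      = (((Finset.univ.filter fun i => i ≤ k ∧ i ≤ l).card : ZMod p)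
          + if l ≤ k then 1 else 0)
        - (((Finset.univ.filter fun i => i ≤ k ∧ i ≤ l).card : ZMod p)
          + if k ≤ l then 1 else 0) := by
    simp only [Dv, bVec_fst]
    rw [show (bVec p d k).2 = fun j => if j ≤ k then (1:ZMod p) else 0 from rfl,
        show (bVec p d l).2 = fun j => if j ≤ l then (1:ZMod p) else 0 from rfl]
    rw [sum_add_rightS, sum_add_leftS]
    simp only [sum_ite_ite, card_and_eqr, card_eq_andl]
    push_cast
    ring
  rcases lt_or_gt_of_ne h with hkl | hkl
  · right
    rw [e, if_neg (not_le.mpr hkl), if_pos hkl.le]; ring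
  · left
    rw [e, if_pos hkl.le, if_neg (not_le.mpr hkl)]; ring

end Dv

section Comm

lemma gcomm_eq (p d : ℕ) (g h : (Fin d → ZMod p) × (Fin d → ZMod p) × ZMod p) :
    gcomm p d g h = (0, 0, (∑ i, g.2.1 i * h.1 i) - ∑ i, g.1 i * h.2.1 i) := by
  simp only [gcomm, gmul, ginv]
  refine Prod.ext ?_ (Prod.ext ?_ ?_)
  · show -g.1 + -h.1 + g.1 + h.1 = 0; abel
  · show -g.2.1 + -h.2.1 + g.2.1 + h.2.1 = 0; abel
  · dsimp only
    simp only [Pi.add_apply, Pi.neg_apply, neg_mul, mul_neg, neg_neg, add_mul,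
      Finset.sum_add_distrib, Finset.sum_neg_distrib]
    rw [show (∑ i, g.2.1 i * g.1 i) = ∑ i, g.1 i * g.2.1 i from
          Finset.sum_congr rfl fun i _ => mul_comm _ _,
        show (∑ i, h.2.1 i * h.1 i) = ∑ i, h.1 i * h.2.1 i from
          Finset.sum_congr rfl fun i _ => mul_comm _ _,
        show (∑ i, h.2.1 i * g.1 i) = ∑ i, g.1 i * h.2.1 i from
          Finset.sum_congr rfl fun i _ => mul_comm _ _]
    ring

lemma val_add_cases {p : ℕ} [NeZero p] (x y : ZMod p) :
    (x + y).val = if x.val + y.val < p then x.val + y.val else x.val + y.val - p := by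
  rw [ZMod.val_add]
  split
  · exact Nat.mod_eq_of_lt ‹_›
  · have hx := ZMod.val_lt x
    have hy := ZMod.val_lt y
    rw [Nat.mod_eq_sub_mod (by omega)]
    exact Nat.mod_eq_of_lt (by omega)

lemma phi_comm {p : ℕ} (x y : ZMod p) : phi p x y = phi p y x := by
  simp [phi, Nat.add_comm]

lemma phiT {p : ℕ} [NeZero p] (x y : ZMod p) :
    phi p (-x) (-y) + phi p (-x + -y) x + phi p (-x + -y + x) y
      - phi p x (-x) - phi p y (-y) = 0 := by
  rw [show -x + -y + x = -y by ring, phi_comm (-y) y]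
  have hp : 0 < p := Nat.pos_of_ne_zero (NeZero.ne p)
  have hx := ZMod.val_lt (-x)
  have hy := ZMod.val_lt (-y)
  have hx' := ZMod.val_lt x
  have hxy := ZMod.val_lt (-x + -y)
  have e1 := val_add_cases (-x) (-y)
  have e2 := val_add_cases (-x + -y) x
  rw [show -x + -y + x = -y by ring] at e2
  have e3 := val_add_cases x (-x)
  rw [show x + -x = 0 by ring, ZMod.val_zero] at e3
  simp only [phi]
  split_ifs at e1 e2 e3 ⊢ <;> first | ring1 | (exfalso; omega)

lemma mcomm_eq (p d : ℕ) [NeZero p] (hd : 0 < d)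
    (g h : (Fin d → ZMod p) × (Fin d → ZMod p) × ZMod p) :
    mcomm p d hd g h = (0, 0, (∑ i, g.2.1 i * h.1 i) - ∑ i, g.1 i * h.2.1 i) := by
  simp only [mcomm, mmul, minv]
  refine Prod.ext ?_ (Prod.ext ?_ ?_)
  · show -g.1 + -h.1 + g.1 + h.1 = 0; abel
  · show -g.2.1 + -h.2.1 + g.2.1 + h.2.1 = 0; abel
  · dsimp only
    simp only [Pi.add_apply, Pi.neg_apply, neg_mul, mul_neg, neg_neg, add_mul,
      Finset.sum_add_distrib, Finset.sum_neg_distrib]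
    rw [show (∑ i, g.2.1 i * g.1 i) = ∑ i, g.1 i * g.2.1 i from
          Finset.sum_congr rfl fun i _ => mul_comm _ _,
        show (∑ i, h.2.1 i * h.1 i) = ∑ i, h.1 i * h.2.1 i from
          Finset.sum_congr rfl fun i _ => mul_comm _ _,
        show (∑ i, h.2.1 i * g.1 i) = ∑ i, g.1 i * h.2.1 i from
          Finset.sum_congr rfl fun i _ => mul_comm _ _]
    linear_combination phiT (g.1 ⟨0, hd⟩) (h.1 ⟨0, hd⟩)

end Comm

/-- No two distinct elements of `ε(S)` commute, with respect to either
extraspecial multiplication: for distinct `g, h ∈ ε(S)` the commutator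
`[g,h]` is `(0,0,1)` or `(0,0,-1)` (hence, `p` being odd, not the identity),
and `gh ≠ hg`. -/
theorem stmt17 (p d : ℕ) (hp : p.Prime) (hodd : Odd p) (hd : 0 < d)
    (g h : (Fin d → ZMod p) × (Fin d → ZMod p) × ZMod p)
    (hgS : g ∈ εS p d) (hhS : h ∈ εS p d) (hne : g ≠ h) :
    (gcomm p d g h = (0, 0, 1) ∨ gcomm p d g h = (0, 0, -1)) ∧
    (mcomm p d hd g h = (0, 0, 1) ∨ mcomm p d hd g h = (0, 0, -1)) ∧
    gcomm p d g h ≠ (0, 0, 0) ∧ mcomm p d hd g h ≠ (0, 0, 0) ∧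
    gmul p d g h ≠ gmul p d h g ∧ mmul p d hd g h ≠ mmul p d hd h g := by

  haveI : NeZero p := ⟨hp.ne_zero⟩
  haveI : Fact (1 < p) := ⟨hp.one_lt⟩
  obtain ⟨s, hs, rfl⟩ := hgS
  obtain ⟨t, ht, rfl⟩ := hhS
  have hst : s ≠ t := by rintro rfl; exact hne rfl
  have key : Dv p d s t = 1 ∨ Dv p d s t = -1 := by
    rcases hs with ⟨k, rfl⟩ | ⟨k, rfl⟩ <;> rcases ht with ⟨l, rfl⟩ | ⟨l, rfl⟩
    · exact dv_aa k l fun e => hst (congrArg _ e)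
    · exact dv_ab k l
    · exact dv_ba k l
    · exact dv_bb k l fun e => hst (congrArg _ e)
  have key' : (∑ i, s.2 i * t.1 i) - ∑ i, s.1 i * t.2 i = 1 ∨
      (∑ i, s.2 i * t.1 i) - ∑ i, s.1 i * t.2 i = -1 := key
  have h10 : (1 : ZMod p) ≠ 0 := one_ne_zero
  have hm10 : (-1 : ZMod p) ≠ 0 := fun e => h10 (neg_eq_zero.mp e)
  have hD0 : (∑ i, s.2 i * t.1 i) - ∑ i, s.1 i * t.2 i ≠ 0 := by
    rcases key' with h | h <;> rw [h]
    · exact h10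
    · exact hm10
  have hg := gcomm_eq p d (s.1, s.2, (0:ZMod p)) (t.1, t.2, (0:ZMod p))
  have hm := mcomm_eq p d hd (s.1, s.2, (0:ZMod p)) (t.1, t.2, (0:ZMod p))
  refine ⟨?_, ?_, ?_, ?_, ?_, ?_⟩
  · rcases key' with h | h
    · left; rw [hg]; exact congrArg _ (congrArg _ h)
    · right; rw [hg]; exact congrArg _ (congrArg _ h)
  · rcases key' with h | h
    · left; rw [hm]; exact congrArg _ (congrArg _ h)
    · right; rw [hm]; exact congrArg _ (congrArg _ h)
  · intro e
    rw [hg] at e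
    exact hD0 (congrArg (fun x => x.2.2) e)
  · intro e
    rw [hm] at e
    exact hD0 (congrArg (fun x => x.2.2) e)
  · intro e
    have e3 := congrArg (fun x => x.2.2) e
    simp only [gmul] at e3
    try dsimp only at e3
    rw [show (∑ i, t.2 i * s.1 i) = ∑ i, s.1 i * t.2 i from
          Finset.sum_congr rfl fun i _ => mul_comm _ _] at e3
    exact hD0 (by linear_combination e3)
  · intro e
    have e3 := congrArg (fun x => x.2.2) e
    simp only [mmul] at e3
    try dsimp only at e3
    rw [show (∑ i, t.2 i * s.1 i) = ∑ i, s.1 i * t.2 i from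
          Finset.sum_congr rfl fun i _ => mul_comm _ _] at e3
    have hphi := phi_comm (s.1 ⟨0, hd⟩) (t.1 ⟨0, hd⟩)
    exact hD0 (by linear_combination e3 - hphi)

end Stmt17
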